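/- Let T be a triangulated category and E an object with an exact triangle E →2 E →2 E →h ΣE. Then h = 2ψ for some isomorphism ψ : E → ΣE, and 4·1_E = 0. -/

import Mathlib

open CategoryTheory Limits Pretriangulated

/-- Let `T` be a triangulated category and `E` an object with an exact triangle
`E →2 E →2 E →h ΣE`.  Then `h = 2ψ` for some isomorphism `ψ : E ⟶ ΣE`, and `4 · 1_E = 0`. -/
theorem stmt_10 {C : Type*} [Category C] [Preadditive C] [HasZeroObject C]
    [HasShift C ℤ] [∀ n : ℤ, (shiftFunctor C n).Additive] [Pretriangulated C]
    [IsTriangulated C]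
    (E : C) (h : E ⟶ E⟦(1 : ℤ)⟧)
    (hT : Triangle.mk ((2 : ℤ) • 𝟙 E) ((2 : ℤ) • 𝟙 E) h ∈ distTriang C) :
    (∃ ψ : E ⟶ E⟦(1 : ℤ)⟧, IsIso ψ ∧ h = (2 : ℤ) • ψ) ∧ (4 : ℤ) • 𝟙 E = 0 := by
  have hT' := rot_of_distTriang _ hT
  obtain ⟨ψ, h₂, h₃⟩ : ∃ ψ : E ⟶ E⟦(1 : ℤ)⟧, _ := Pretriangulated.complete_distinguished_triangle_morphism
    _ _ hT hT' (𝟙 E) (𝟙 E) (by exact (Category.comp_id _).trans (Category.id_comp _).symm)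
  dsimp only [Triangle.mk, Triangle.rotate] at h₂ h₃
  simp only [Category.comp_id, Category.id_comp, Functor.map_id] at h₂ h₃
  -- h₂ : (2 : ℤ) • 𝟙 E ≫ ψ = h  (roughly)
  have hψ : h = (2 : ℤ) • ψ := by
    rw [← h₂]; simp
  have hψ' : h = -((2 : ℤ) • ψ) := by
    simpa [Functor.map_zsmul] using h₃
  have hiso : IsIso ψ := by
    exact Pretriangulated.isIso₃_of_isIso₁₂
      { hom₁ := 𝟙 E, hom₂ := 𝟙 E, hom₃ := ψ,
        comm₁ := by exact (Category.comp_id _).trans (Category.id_comp _).symm,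
        comm₂ := by exact h₂.trans (Category.id_comp _).symm,
        comm₃ := by exact h₃ } hT hT'
      (by exact IsIso.id E) (by exact IsIso.id E)
  have h4ψ : (4 : ℤ) • ψ = 0 := by
    have := hψ.symm.trans hψ'
    rw [eq_neg_iff_add_eq_zero] at this
    convert this using 1
    rw [← add_smul]; norm_num
  refine ⟨⟨ψ, hiso, hψ⟩, ?_⟩
  have : ((4 : ℤ) • 𝟙 E) ≫ ψ = 0 := by simpa using h4ψ
  have := this =≫ (inv ψ)
  simpa using this
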